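/- The formal power series E ∈ ℚ⟦t⟧ whose n-th coefficient is f(0,n) satisfies the first-order linear differential equation t·(1 − 4t²)·E′ + (2 − 4t²)·E = 2, where E′ denotes the formal derivative of E with respect to t. -/

import Mathlib

/-- The number of walks of length `n` on the nonnegative integers starting at `0`,
ending at `i`, with steps `+1` or `-1`. -/
noncomputable def walkCount (i n : ℕ) : ℕ :=
  Nat.card {w : Fin (n + 1) → ℕ //
    w 0 = 0 ∧ w (Fin.last n) = i ∧
    ∀ k : Fin n, ((w k.succ : ℤ) - (w k.castSucc : ℤ)).natAbs = 1}

open DyckStep List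

abbrev WalkType (n : ℕ) := {w : Fin (n + 1) → ℕ //
    w 0 = 0 ∧ w (Fin.last n) = 0 ∧
    ∀ k : Fin n, ((w k.succ : ℤ) - (w k.castSucc : ℤ)).natAbs = 1}

def stepsOf {n : ℕ} (w : Fin (n+1) → ℕ) : List DyckStep :=
  List.ofFn (fun k : Fin n => if w k.castSucc < w k.succ then U else D)

lemma count_U_add_count_D (l : List DyckStep) : l.count U + l.count D = l.length := by
  induction l with
  | nil => simp
  | cons h t ih => cases h <;> simp [List.count_cons] <;> omega

lemma stepsOf_length {n : ℕ} (w : Fin (n+1) → ℕ) : (stepsOf w).length = n := by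
  simp [stepsOf]

lemma stepsOf_getElem {n : ℕ} (w : Fin (n+1) → ℕ) (k : ℕ) (hk : k < n) :
    (stepsOf w)[k]'(by rw [stepsOf_length]; exact hk) =
      if w ⟨k, by omega⟩ < w ⟨k+1, by omega⟩ then U else D := by
  simp [stepsOf]

lemma take_succ_eq {α : Type*} (l : List α) (k : ℕ) (hk : k < l.length) :
    l.take (k+1) = l.take k ++ [l[k]] := by
  rw [List.take_succ, List.getElem?_eq_getElem hk]
  rfl

lemma walk_eq_count {n : ℕ} (w : Fin (n+1) → ℕ)
    (hw : ∀ k : Fin n, ((w k.succ : ℤ) - (w k.castSucc : ℤ)).natAbs = 1)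
    (h0 : w 0 = 0) : ∀ k : ℕ, (hk : k ≤ n) →
    (w ⟨k, by omega⟩ : ℤ) =
      ((stepsOf w).take k).count U - ((stepsOf w).take k).count D := by
  intro k
  induction k with
  | zero => intro _; simpa using congrArg (Nat.cast (R := ℤ)) h0
  | succ k ih =>
    intro hk
    have hk' : k < n := hk
    have hkl : k < (stepsOf w).length := by rw [stepsOf_length]; exact hk'
    have htake := take_succ_eq (stepsOf w) k hkl
    have hget := stepsOf_getElem w k hk'
    have hstep := hw ⟨k, hk'⟩
    have hsucc : w (Fin.succ ⟨k, hk'⟩) = w ⟨k+1, by omega⟩ := rfl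
    have hcast : w (Fin.castSucc ⟨k, hk'⟩) = w ⟨k, by omega⟩ := rfl
    rw [hsucc, hcast] at hstep
    have ihk := ih (by omega)
    rw [htake, hget, List.count_append, List.count_append]
    by_cases hlt : w (⟨k, by omega⟩ : Fin (n+1)) < w (⟨k+1, by omega⟩ : Fin (n+1))
    · rw [if_pos hlt]
      have h1 : ([U] : List DyckStep).count U = 1 := by decide
      have h2 : ([U] : List DyckStep).count D = 0 := by decide
      rw [h1, h2]
      push_cast
      omega
    · rw [if_neg hlt]
      have h1 : ([D] : List DyckStep).count U = 0 := by decide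
      have h2 : ([D] : List DyckStep).count D = 1 := by decide
      rw [h1, h2]
      push_cast
      omega


abbrev DyckType (n : ℕ) := {l : List DyckStep // l.length = n ∧ l.count U = l.count D ∧
    ∀ i, (l.take i).count D ≤ (l.take i).count U}

lemma take_eq_self_of_le {α : Type*} (l : List α) (i : ℕ) (h : l.length ≤ i) :
    l.take i = l := List.take_of_length_le h

def wToL (n : ℕ) (w : WalkType n) : DyckType n := by
  refine ⟨stepsOf w.1, stepsOf_length _, ?_, ?_⟩
  · have := walk_eq_count w.1 w.2.2.2 w.2.1 n le_rfl
    rw [take_eq_self_of_le _ _ (by rw [stepsOf_length])] at this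
    have hlast : w.1 (Fin.last n) = w.1 ⟨n, by omega⟩ := rfl
    rw [← hlast, w.2.2.1] at this
    omega
  · intro i
    by_cases hi : i ≤ n
    · have := walk_eq_count w.1 w.2.2.2 w.2.1 i hi
      omega
    · rw [take_eq_self_of_le _ _ (by rw [stepsOf_length]; omega)]
      have := walk_eq_count w.1 w.2.2.2 w.2.1 n le_rfl
      rw [take_eq_self_of_le _ _ (by rw [stepsOf_length])] at this
      omega

def lToW (n : ℕ) (l : DyckType n) : WalkType n := by
  refine ⟨fun k => ((l.1.take k).count U - (l.1.take k).count D : ℕ), by simp, ?_, ?_⟩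
  · show ((l.1.take n).count U - (l.1.take n).count D : ℕ) = 0
    rw [take_eq_self_of_le _ _ (by omega), l.2.2.1]
    omega
  · intro k
    obtain ⟨l, hlen, hbal, hpre⟩ := l
    have hk : (k : ℕ) < n := k.isLt
    show ((((l.take ((k:ℕ)+1)).count U - (l.take ((k:ℕ)+1)).count D : ℕ) : ℤ) -
      (((l.take (k:ℕ)).count U - (l.take (k:ℕ)).count D : ℕ) : ℤ)).natAbs = 1
    have htake := take_succ_eq l (k:ℕ) (by omega)
    have h1 := hpre (k:ℕ)
    have h2 := hpre ((k:ℕ)+1)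
    rw [htake, List.count_append, List.count_append] at h2 ⊢
    rcases (l[(k:ℕ)]'(by omega)).dichotomy with h | h <;> rw [h] at h2 ⊢
    · have c1 : ([U] : List DyckStep).count U = 1 := by decide
      have c2 : ([U] : List DyckStep).count D = 0 := by decide
      rw [c1, c2] at h2 ⊢
      omega
    · have c1 : ([D] : List DyckStep).count U = 0 := by decide
      have c2 : ([D] : List DyckStep).count D = 1 := by decide
      rw [c1, c2] at h2 ⊢
      omega

def walkEquiv (n : ℕ) : WalkType n ≃ DyckType n where
  toFun := wToL n
  invFun := lToW n
  left_inv w := by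
    apply Subtype.ext
    funext k
    show ((stepsOf w.1).take (k:ℕ)).count U - ((stepsOf w.1).take (k:ℕ)).count D = w.1 k
    have := walk_eq_count w.1 w.2.2.2 w.2.1 (k:ℕ) (by omega)
    have hk : w.1 ⟨(k:ℕ), by omega⟩ = w.1 k := congrArg w.1 (Fin.ext rfl)
    rw [hk] at this
    omega
  right_inv l := by
    apply Subtype.ext
    obtain ⟨l, hlen, hbal, hpre⟩ := l
    show stepsOf _ = l
    apply List.ext_getElem (by rw [stepsOf_length]; omega)
    intro k hk1 hk2
    have hkn : k < n := by rw [stepsOf_length] at hk1; omega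
    rw [stepsOf_getElem _ k hkn]
    have htake := take_succ_eq l k (by omega)
    have h1 := hpre k
    have h2 := hpre (k+1)
    rw [htake, List.count_append, List.count_append] at h2
    show (if ((l.take k).count U - (l.take k).count D : ℕ) <
        ((l.take (k+1)).count U - (l.take (k+1)).count D : ℕ) then U else D) = l[k]
    rw [htake, List.count_append, List.count_append]
    rcases (l[k]'(by omega)).dichotomy with h | h <;> rw [h] at h2 ⊢
    · have c1 : ([U] : List DyckStep).count U = 1 := by decide
      have c2 : ([U] : List DyckStep).count D = 0 := by decide
      rw [c1, c2] at h2 ⊢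
      rw [if_pos (by omega)]
    · have c1 : ([D] : List DyckStep).count U = 0 := by decide
      have c2 : ([D] : List DyckStep).count D = 1 := by decide
      rw [c1, c2] at h2 ⊢
      rw [if_neg (by omega)]

def dyckEquiv (m : ℕ) : DyckType (2*m) ≃ {p : DyckWord // p.semilength = m} where
  toFun l := ⟨⟨l.1, l.2.2.1, l.2.2.2⟩, by
    have h := count_U_add_count_D l.1
    have h1 := l.2.1
    have h2 := l.2.2.1
    show l.1.count U = m
    omega⟩
  invFun p := ⟨p.1.toList, by
    have h2 := p.1.two_mul_semilength_eq_length
    refine ⟨by rw [← h2, p.2], p.1.count_U_eq_count_D, p.1.count_D_le_count_U⟩⟩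
  left_inv l := rfl
  right_inv p := rfl

lemma walkCount_even (m : ℕ) : walkCount 0 (2*m) = catalan m := by
  have : walkCount 0 (2*m) = Nat.card (WalkType (2*m)) := rfl
  rw [this, Nat.card_congr ((walkEquiv (2*m)).trans (dyckEquiv m)),
    Nat.card_eq_fintype_card, DyckWord.card_dyckWord_semilength_eq_catalan]

lemma walkCount_odd (m : ℕ) : walkCount 0 (2*m+1) = 0 := by
  have : walkCount 0 (2*m+1) = Nat.card (WalkType (2*m+1)) := rfl
  rw [this]
  have : IsEmpty (WalkType (2*m+1)) := by
    constructor
    intro w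
    obtain ⟨l, hlen, hbal, -⟩ := walkEquiv (2*m+1) w
    have := count_U_add_count_D l
    omega
  simp [Nat.card_eq_zero]

lemma walkCount_rec (n : ℕ) : ((n:ℚ)+4) * walkCount 0 (n+2) = 4*((n:ℚ)+1) * walkCount 0 n := by
  rcases Nat.even_or_odd n with ⟨m, hm⟩ | ⟨m, hm⟩
  · have h1 : walkCount 0 (n+2) = catalan (m+1) := by
      rw [show n+2 = 2*(m+1) by omega]; exact walkCount_even _
    have h2 : walkCount 0 n = catalan m := by
      rw [show n = 2*m by omega]; exact walkCount_even _
    rw [h1, h2, show (n:ℚ) = 2*m by rw [hm]; push_cast; ring]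
    have E1 : ((m:ℚ)+2) * (catalan (m+1) : ℚ) = ((m+1).centralBinom : ℚ) := by
      exact_mod_cast congrArg (Nat.cast (R := ℚ)) (succ_mul_catalan_eq_centralBinom (m+1))
    have E2 : ((m:ℚ)+1) * ((m+1).centralBinom : ℚ) = 2*(2*(m:ℚ)+1) * (m.centralBinom : ℚ) := by
      exact_mod_cast congrArg (Nat.cast (R := ℚ)) (Nat.succ_mul_centralBinom_succ m)
    have E3 : ((m:ℚ)+1) * (catalan m : ℚ) = (m.centralBinom : ℚ) := by
      exact_mod_cast congrArg (Nat.cast (R := ℚ)) (succ_mul_catalan_eq_centralBinom m)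
    apply mul_left_cancel₀ (show ((m:ℚ)+1) ≠ 0 by positivity)
    linear_combination (2*((m:ℚ)+1))*E1 + 2*E2 - (4*(2*(m:ℚ)+1))*E3
  · have h1 : walkCount 0 (n+2) = 0 := by
      rw [show n+2 = 2*(m+1)+1 by omega]; exact walkCount_odd _
    have h2 : walkCount 0 n = 0 := by
      rw [show n = 2*m+1 by omega]; exact walkCount_odd _
    rw [h1, h2]
    simp

open PowerSeries in
theorem excursion_series_ode1 :
    PowerSeries.X * (1 - 4 * PowerSeries.X ^ 2) *
        (PowerSeries.derivative ℚ (PowerSeries.mk fun n => (walkCount 0 n : ℚ))) +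
      (2 - 4 * PowerSeries.X ^ 2) * (PowerSeries.mk fun n => (walkCount 0 n : ℚ)) = 2 := by
  have h2 : (2 : ℚ⟦X⟧) = C 2 := (map_ofNat _ _).symm
  have h4 : (4 : ℚ⟦X⟧) = C 4 := (map_ofNat _ _).symm
  set E : ℚ⟦X⟧ := PowerSeries.mk fun n => (walkCount 0 n : ℚ) with hE
  set Dv := PowerSeries.derivative ℚ E with hDv
  have expand : X * (1 - 4 * X ^ 2) * Dv + (2 - 4 * X ^ 2) * E
      = X^1*Dv + C 2 * E - C 4 * (X^3*Dv) - C 4 * (X^2*E) := by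
    rw [← h2, ← h4]; ring
  rw [expand, h2]
  ext N
  simp only [map_sub, map_add, coeff_C_mul, coeff_X_pow_mul', coeff_C]
  have ha : ∀ j, coeff j E = (walkCount 0 j : ℚ) := fun j => coeff_mk j _
  have hd : ∀ j, coeff j Dv = (walkCount 0 (j+1) : ℚ) * (j+1) := by
    intro j; rw [hDv, coeff_derivative, ha]
  have a0 : walkCount 0 0 = 1 := by simpa using walkCount_even 0
  have a1 : walkCount 0 1 = 0 := by simpa using walkCount_odd 0
  rcases N with _ | _ | M
  · norm_num [ha, a0]
  · norm_num [ha, hd, a1]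
  · have hrec := walkCount_rec M
    have l1 : (1:ℕ) ≤ M + 1 + 1 := by omega
    have l2 : (2:ℕ) ≤ M + 1 + 1 := by omega
    rw [if_pos l1, if_pos l2, if_neg (by omega : ¬ (M + 1 + 1 = 0))]
    rcases M with _ | M'
    · rw [if_neg (by omega)]
      norm_num [ha, hd]
      norm_num at hrec
      have : (walkCount 0 2 : ℚ) = (walkCount 0 0 : ℚ) := by exact_mod_cast hrec
      linarith
    · rw [if_pos (by omega : (3:ℕ) ≤ M' + 1 + 1 + 1)]
      have e1 : M' + 1 + 1 + 1 - 1 = M' + 2 := by omega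
      have e2 : M' + 1 + 1 + 1 - 3 = M' := by omega
      have e3 : M' + 1 + 1 + 1 - 2 = M' + 1 := by omega
      rw [e1, e2, e3, hd, hd, ha, ha]
      push_cast at hrec ⊢
      linarith
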